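/- Let B be a symmetric n×n real matrix, μ ⊆ [n] with |μ| = k such that B[μ] is nonsingular, and let r = rank(B). If m is an integer with k < m ≤ r, then there exists γ ⊆ [n]∖μ with |γ∪μ| equal to m or m+1 such that B[γ∪μ] is nonsingular; i.e., B[μ] is contained in a nonsingular principal submatrix of B of order m or m+1. -/

import Mathlib

open Matrix Finset

variable {n : ℕ}


def unionEquiv (γ μ : Finset (Fin n)) (hd : Disjoint γ μ) :
    ↥(γ ∪ μ) ≃ ↥γ ⊕ ↥μ where
  toFun x := if h : (x : Fin n) ∈ γ then Sum.inl ⟨x, h⟩ else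
    Sum.inr ⟨x, (Finset.mem_union.mp x.2).resolve_left h⟩
  invFun := Sum.elim (fun a => ⟨a, Finset.mem_union_left _ a.2⟩)
    (fun b => ⟨b, Finset.mem_union_right _ b.2⟩)
  left_inv x := by
    by_cases h : (x : Fin n) ∈ γ <;> simp [h]
  right_inv x := by
    cases x with
    | inl a => simp [a.2]
    | inr b =>
        have : (b : Fin n) ∉ γ := fun hb => (Finset.disjoint_left.mp hd hb b.2)
        simp [this]

noncomputable def schurS (B : Matrix (Fin n) (Fin n) ℝ) (μ : Finset (Fin n)) :
    Matrix (Fin n) (Fin n) ℝ :=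
  B - B.submatrix id (fun x : μ => (x : Fin n)) *
      (B.submatrix (fun x : μ => (x : Fin n)) (fun x : μ => (x : Fin n)))⁻¹ *
      B.submatrix (fun x : μ => (x : Fin n)) id

lemma det_factor (B : Matrix (Fin n) (Fin n) ℝ) (γ μ : Finset (Fin n)) (hd : Disjoint γ μ)
    (hμ : IsUnit (B.submatrix (fun x : μ => (x : Fin n)) (fun x : μ => (x : Fin n))).det) :
    (B.submatrix (fun x : ↥(γ ∪ μ) => (x : Fin n)) (fun x : ↥(γ ∪ μ) => (x : Fin n))).det =
    (B.submatrix (fun x : μ => (x : Fin n)) (fun x : μ => (x : Fin n))).det *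
    ((schurS B μ).submatrix (fun x : γ => (x : Fin n)) (fun x : γ => (x : Fin n))).det := by
  classical
  set A := B.submatrix (fun x : μ => (x : Fin n)) (fun x : μ => (x : Fin n)) with hA
  have : Invertible A := A.invertibleOfIsUnitDet hμ
  set e := unionEquiv γ μ hd
  have hkey : B.submatrix (fun x : ↥(γ ∪ μ) => (x : Fin n)) (fun x : ↥(γ ∪ μ) => (x : Fin n)) =
      (fromBlocks (B.submatrix (fun x : γ => (x : Fin n)) (fun x : γ => (x : Fin n)))
        (B.submatrix (fun x : γ => (x : Fin n)) (fun x : μ => (x : Fin n)))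
        (B.submatrix (fun x : μ => (x : Fin n)) (fun x : γ => (x : Fin n))) A).submatrix e e := by
    ext x y
    simp only [submatrix_apply, e, unionEquiv, Equiv.coe_fn_mk]
    by_cases hx : (x : Fin n) ∈ γ <;> by_cases hy : (y : Fin n) ∈ γ <;>
      simp [hx, hy, fromBlocks, hA]
  rw [hkey, det_submatrix_equiv_self, Matrix.det_fromBlocks₂₂]
  congr 1
  congr 1
  rw [invOf_eq_nonsing_inv]
  ext a b
  simp [schurS, Matrix.mul_apply, Finset.sum_mul, Finset.mul_sum]
  rfl

lemma schurS_symm (B : Matrix (Fin n) (Fin n) ℝ) (hsym : B.IsSymm) (μ : Finset (Fin n)) :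
    (schurS B μ).IsSymm := by
  have hA : (B.submatrix (fun x : μ => (x : Fin n)) (fun x : μ => (x : Fin n)))ᵀ =
      B.submatrix (fun x : μ => (x : Fin n)) (fun x : μ => (x : Fin n)) := by
    rw [transpose_submatrix, hsym.eq]
  unfold Matrix.IsSymm schurS
  rw [transpose_sub, transpose_mul, transpose_mul, transpose_nonsing_inv, hA,
    transpose_submatrix, transpose_submatrix, hsym.eq, Matrix.mul_assoc]

lemma rank_le_of_schur_zero (B : Matrix (Fin n) (Fin n) ℝ) (μ : Finset (Fin n))
    (hμ : IsUnit (B.submatrix (fun x : μ => (x : Fin n)) (fun x : μ => (x : Fin n))).det)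
    (h0 : ∀ i j, i ∉ μ → j ∉ μ → schurS B μ i j = 0) : B.rank ≤ μ.card := by
  classical
  set A := B.submatrix (fun x : μ => (x : Fin n)) (fun x : μ => (x : Fin n)) with hAdef
  set Bc := B.submatrix id (fun x : μ => (x : Fin n)) with hBc
  set Br := B.submatrix (fun x : μ => (x : Fin n)) id with hBr
  have hB : B = Bc * A⁻¹ * Br := by
    ext i j
    by_cases hi : i ∈ μ
    · have h1 : ∀ b, (Bc * A⁻¹) i b = (1 : Matrix ↥μ ↥μ ℝ) ⟨i, hi⟩ b := by
        intro b
        rw [Matrix.mul_apply, ← Matrix.mul_nonsing_inv A hμ, Matrix.mul_apply]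
        rfl
      rw [Matrix.mul_apply]
      simp_rw [h1]
      rw [← Matrix.mul_apply, Matrix.one_mul]
      rfl
    · by_cases hj : j ∈ μ
      · rw [Matrix.mul_apply]
        have h2 : ∀ b, Br b j = A b ⟨j, hj⟩ := fun b => rfl
        simp_rw [h2]
        rw [← Matrix.mul_apply, Matrix.mul_assoc, Matrix.nonsing_inv_mul A hμ,
          Matrix.mul_one]
        rfl
      · have := h0 i j hi hj
        rw [schurS] at this
        rw [Matrix.sub_apply] at this
        linarith [this]
  calc B.rank = (Bc * A⁻¹ * Br).rank := by rw [← hB]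
    _ ≤ (Bc * A⁻¹).rank := Matrix.rank_mul_le_left _ _
    _ ≤ Bc.rank := Matrix.rank_mul_le_left _ _
    _ ≤ Fintype.card ↥μ := Matrix.rank_le_card_width _
    _ = μ.card := Fintype.card_coe _

lemma key_ext (B : Matrix (Fin n) (Fin n) ℝ) (hsym : B.IsSymm) (μ : Finset (Fin n))
    (hμ : IsUnit (B.submatrix (fun x : μ => (x : Fin n)) (fun x : μ => (x : Fin n))).det)
    (hrank : μ.card < B.rank) :
    ∃ γ : Finset (Fin n), Disjoint γ μ ∧
      ((γ ∪ μ).card = μ.card + 1 ∨ (γ ∪ μ).card = μ.card + 2) ∧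
      IsUnit (B.submatrix (fun x : ↥(γ ∪ μ) => (x : Fin n))
        (fun x : ↥(γ ∪ μ) => (x : Fin n))).det := by
  classical
  by_contra hcon
  push_neg at hcon
  set S := schurS B μ with hS
  have hdet0 : (B.submatrix (fun x : μ => (x : Fin n)) (fun x : μ => (x : Fin n))).det ≠ 0 :=
    hμ.ne_zero
  have hdiag : ∀ i, i ∉ μ → S i i = 0 := by
    intro i hi
    have hd : Disjoint {i} μ := by simp [hi]
    have hc : ({i} ∪ μ).card = μ.card + 1 := by
      rw [card_union_of_disjoint hd, card_singleton]; omega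
    have hnu := hcon {i} hd (Or.inl hc)
    rw [isUnit_iff_ne_zero, not_ne_iff, det_factor B {i} μ hd hμ] at hnu
    haveI : Subsingleton ↥({i} : Finset (Fin n)) :=
      ⟨fun a b => Subtype.ext (by
        have ha := a.2; have hb := b.2
        simp only [Finset.mem_singleton] at ha hb
        rw [ha, hb])⟩
    have hdd : ((schurS B μ).submatrix (fun x : ↥({i} : Finset (Fin n)) => (x : Fin n))
        (fun x : ↥({i} : Finset (Fin n)) => (x : Fin n))).det = S i i :=
      Matrix.det_eq_elem_of_subsingleton _ (⟨i, Finset.mem_singleton_self i⟩ : ↥({i} : Finset (Fin n)))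
    rw [hdd] at hnu
    rcases mul_eq_zero.mp hnu with h | h
    · exact absurd h hdet0
    · exact h
  have hoff : ∀ i j, i ∉ μ → j ∉ μ → S i j = 0 := by
    intro i j hi hj
    by_cases hij : i = j
    · subst hij; exact hdiag i hi
    · have hd : Disjoint {i, j} μ := by simp [hi, hj]
      have hc : ({i, j} ∪ μ).card = μ.card + 2 := by
        rw [card_union_of_disjoint hd, card_pair hij]; omega
      have hnu := hcon {i, j} hd (Or.inr hc)
      rw [isUnit_iff_ne_zero, not_ne_iff, det_factor B {i, j} μ hd hμ] at hnu
      have hi' : i ∈ ({i, j} : Finset (Fin n)) := by simp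
      have hj' : j ∈ ({i, j} : Finset (Fin n)) := by simp
      let e2 : Fin 2 ≃ ↥({i, j} : Finset (Fin n)) :=
        { toFun := ![⟨i, hi'⟩, ⟨j, hj'⟩]
          invFun := fun x => if (x : Fin n) = i then 0 else 1
          left_inv := by
            intro x
            fin_cases x <;> simp [hij, Ne.symm hij]
          right_inv := by
            intro x
            have hx := x.2
            simp only [Finset.mem_insert, Finset.mem_singleton] at hx
            show ![(⟨i, hi'⟩ : ↥({i, j} : Finset (Fin n))), ⟨j, hj'⟩]
              (if (x : Fin n) = i then 0 else 1) = x
            rcases hx with hx | hx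
            · rw [if_pos hx]
              exact Subtype.ext hx.symm
            · rw [if_neg (fun h => hij (h.symm.trans hx))]
              exact Subtype.ext hx.symm }
      set M := S.submatrix (fun x : ↥({i,j}:Finset (Fin n)) => (x : Fin n))
            (fun x : ↥({i,j}:Finset (Fin n)) => (x : Fin n)) with hM
      rw [← Matrix.det_submatrix_equiv_self e2 M, Matrix.det_fin_two] at hnu
      have h00 : (M.submatrix e2 e2) 0 0 = S i i := rfl
      have h01 : (M.submatrix e2 e2) 0 1 = S i j := rfl
      have h10 : (M.submatrix e2 e2) 1 0 = S j i := rfl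
      have h11 : (M.submatrix e2 e2) 1 1 = S j j := rfl
      have hsy : S j i = S i j := (schurS_symm B hsym μ).apply i j
      rw [h00, h01, h10, h11, hdiag i hi, hdiag j hj, hsy] at hnu
      rcases mul_eq_zero.mp hnu with h | h
      · exact absurd h hdet0
      · exact mul_self_eq_zero.mp (by linarith)
  have := rank_le_of_schur_zero B μ hμ hoff
  omega

theorem main_aux (d : ℕ) : ∀ (μ : Finset (Fin n)) (B : Matrix (Fin n) (Fin n) ℝ),
    B.IsSymm →
    IsUnit (B.submatrix (fun x : μ => (x : Fin n)) (fun x : μ => (x : Fin n))).det →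
    ∀ m : ℕ, μ.card < m → m ≤ B.rank → m - μ.card ≤ d + 1 →
    ∃ γ : Finset (Fin n), Disjoint γ μ ∧
      ((γ ∪ μ).card = m ∨ (γ ∪ μ).card = m + 1) ∧
      IsUnit (B.submatrix (fun x : ↥(γ ∪ μ) => (x : Fin n))
        (fun x : ↥(γ ∪ μ) => (x : Fin n))).det := by
  induction d with
  | zero =>
      intro μ B hsym hμ m hm1 hm2 hd
      obtain ⟨γ₀, hdis, hcard, hunit⟩ := key_ext B hsym μ hμ (lt_of_lt_of_le hm1 hm2)
      refine ⟨γ₀, hdis, ?_, hunit⟩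
      omega
  | succ d ih =>
      intro μ B hsym hμ m hm1 hm2 hd
      obtain ⟨γ₀, hdis, hcard, hunit⟩ := key_ext B hsym μ hμ (lt_of_lt_of_le hm1 hm2)
      by_cases hc : (γ₀ ∪ μ).card = m ∨ (γ₀ ∪ μ).card = m + 1
      · exact ⟨γ₀, hdis, hc, hunit⟩
      · push_neg at hc
        have hlt : (γ₀ ∪ μ).card < m := by omega
        obtain ⟨γ', hdis', hcard', hunit'⟩ :=
          ih (γ₀ ∪ μ) B hsym hunit m hlt hm2 (by omega)
        refine ⟨γ' ∪ γ₀, ?_, ?_, ?_⟩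
        · rw [Finset.disjoint_union_left]
          exact ⟨hdis'.mono_right Finset.subset_union_right, hdis⟩
        · rwa [Finset.union_assoc]
        · rw [Finset.union_assoc]
          exact hunit'

theorem stmt16 {n : ℕ} (B : Matrix (Fin n) (Fin n) ℝ) (hsym : B.IsSymm)
    (μ : Finset (Fin n))
    (hμ : IsUnit (B.submatrix (fun x : μ => (x : Fin n)) (fun x : μ => (x : Fin n))).det)
    (m : ℕ) (hm1 : μ.card < m) (hm2 : m ≤ B.rank) :
    ∃ γ : Finset (Fin n), Disjoint γ μ ∧
      ((γ ∪ μ).card = m ∨ (γ ∪ μ).card = m + 1) ∧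
      IsUnit (B.submatrix (fun x : ↥(γ ∪ μ) => (x : Fin n))
        (fun x : ↥(γ ∪ μ) => (x : Fin n))).det :=
  main_aux (m - μ.card) μ B hsym hμ m hm1 hm2 (by omega)
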